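/- There exists a Zariski-open dense subset U of the determinantal variety M = {X ∈ ℝ^{m×n} : rank X ≤ r} with the following property: for every X* = [x*_1 ⋯ x*_n] ∈ U and every choice of permutation matrices Π̃_1,…,Π̃_n ∈ 𝒫_m, setting X̃ = [Π̃_1 x*_1 ⋯ Π̃_n x*_n], one has rank [Π_1 x̃_1 ⋯ Π_n x̃_n] ≥ r for every tuple (Π_1,…,Π_n) ∈ 𝒫_m^n, with equality if and only if [Π_1 x̃_1 ⋯ Π_n x̃_n] = Π X* for some single permutation matrix Π ∈ 𝒫_m. -/

import Mathlib

/-- `P` is an `m × m` permutation matrix. -/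
def IsPermMatrix {m : ℕ} (P : Matrix (Fin m) (Fin m) ℝ) : Prop :=
  ∃ σ : Equiv.Perm (Fin m), P = σ.permMatrix ℝ

/-- The determinantal variety `M = {X ∈ ℝ^{m×n} : rank X ≤ r}`. -/
def detVar (m n r : ℕ) : Set (Matrix (Fin m) (Fin n) ℝ) :=
  {X | X.rank ≤ r}

/-- Evaluation of a polynomial in the matrix entries at a matrix. -/
noncomputable def polyEval {m n : ℕ} (p : MvPolynomial (Fin m × Fin n) ℝ)
    (X : Matrix (Fin m) (Fin n) ℝ) : ℝ :=
  MvPolynomial.eval (fun q => X q.1 q.2) p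

/-- `U` is a nonempty Zariski-open (hence dense) subset of the determinantal
variety: there are finitely many polynomials in the entries, at least one of
which does not vanish identically on `M`, such that `U` is the set of points
of `M` at which at least one of the polynomials is nonzero. -/
def IsZariskiOpenDense (m n r : ℕ) (U : Set (Matrix (Fin m) (Fin n) ℝ)) : Prop :=
  ∃ (k : ℕ) (ps : Fin k → MvPolynomial (Fin m × Fin n) ℝ),
    (∃ (i : Fin k) (X : Matrix (Fin m) (Fin n) ℝ),
        X ∈ detVar m n r ∧ polyEval (ps i) X ≠ 0) ∧
    U = {X ∈ detVar m n r | ∃ i : Fin k, polyEval (ps i) X ≠ 0}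

/-- Applying a tuple of `m × m` matrices columnwise to an `m × n` matrix:
column `j` of the result is `P j` applied to column `j` of `X`. -/
def colAct {m n : ℕ} (P : Fin n → Matrix (Fin m) (Fin m) ℝ)
    (X : Matrix (Fin m) (Fin n) ℝ) : Matrix (Fin m) (Fin n) ℝ :=
  Matrix.of fun i j => (P j).mulVec (fun i' => X i' j) i


noncomputable section
open Matrix MvPolynomial

namespace UPCA

variable {m n : ℕ}

def rowPermM (σ : Fin n → Equiv.Perm (Fin m)) (X : Matrix (Fin m) (Fin n) ℝ) :
    Matrix (Fin m) (Fin n) ℝ := Matrix.of fun i j => X (σ j i) j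

lemma permMatrix_mulVec (σ : Equiv.Perm (Fin m)) (v : Fin m → ℝ) (i : Fin m) :
    (σ.permMatrix ℝ).mulVec v i = v (σ i) := by
  simp [Matrix.mulVec, dotProduct, Equiv.Perm.permMatrix, PEquiv.toMatrix_apply,
    Equiv.toPEquiv_apply, Finset.sum_ite_eq, ite_mul]

lemma rowPermM_const (τ : Equiv.Perm (Fin m)) (X : Matrix (Fin m) (Fin n) ℝ) :
    rowPermM (fun _ => τ) X = (τ.permMatrix ℝ) * X := by
  rw [Equiv.Perm.permMatrix, PEquiv.toMatrix_toPEquiv_mul]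
  rfl

lemma rowPermM_one (X : Matrix (Fin m) (Fin n) ℝ) :
    rowPermM (fun _ => (1 : Equiv.Perm (Fin m))) X = X := rfl

lemma isUnit_permMatrix_det (τ : Equiv.Perm (Fin m)) :
    IsUnit (τ.permMatrix ℝ).det := by
  rw [Matrix.det_permutation]
  rcases Int.units_eq_one_or (Equiv.Perm.sign τ) with h | h <;> simp [h]

lemma rank_permMatrix_mul (τ : Equiv.Perm (Fin m)) (X : Matrix (Fin m) (Fin n) ℝ) :
    ((τ.permMatrix ℝ) * X).rank = X.rank :=
  Matrix.rank_mul_eq_right_of_isUnit_det _ _ (isUnit_permMatrix_det τ)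

variable {m n k : ℕ}

lemma colAct_eq (P : Fin n → Matrix (Fin m) (Fin m) ℝ) (σ : Fin n → Equiv.Perm (Fin m))
    (h : ∀ j, P j = (σ j).permMatrix ℝ) (X : Matrix (Fin m) (Fin n) ℝ) :
    colAct P X = rowPermM σ X := by
  ext i j
  simp [colAct, h, permMatrix_mulVec, rowPermM]

lemma colAct_colAct (P Pt : Fin n → Matrix (Fin m) (Fin m) ℝ)
    (π πt : Fin n → Equiv.Perm (Fin m))
    (hP : ∀ j, P j = (π j).permMatrix ℝ) (hPt : ∀ j, Pt j = (πt j).permMatrix ℝ)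
    (X : Matrix (Fin m) (Fin n) ℝ) :
    colAct P (colAct Pt X) = rowPermM (fun j => πt j * π j) X := by
  rw [colAct_eq Pt πt hPt X, colAct_eq P π hP]
  ext i j
  simp [rowPermM]

def selR (f : Fin k → Fin m) : Matrix (Fin k) (Fin m) ℝ :=
  Matrix.of fun a i => if f a = i then 1 else 0

def selC (g : Fin k → Fin n) : Matrix (Fin n) (Fin k) ℝ :=
  Matrix.of fun j b => if g b = j then 1 else 0

lemma sel_mul (X : Matrix (Fin m) (Fin n) ℝ) (f : Fin k → Fin m) (g : Fin k → Fin n) :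
    selR f * X * selC g = X.submatrix f g := by
  ext a b
  simp [selR, selC, Matrix.mul_apply, Finset.sum_ite_eq, ite_mul, mul_ite,
    Finset.sum_ite_eq']

lemma rank_ge_of_det (X : Matrix (Fin m) (Fin n) ℝ) (f : Fin k → Fin m) (g : Fin k → Fin n)
    (h : (X.submatrix f g).det ≠ 0) : k ≤ X.rank := by
  have hu : IsUnit (X.submatrix f g) :=
    (Matrix.isUnit_iff_isUnit_det _).2 (isUnit_iff_ne_zero.2 h)
  have h1 : (X.submatrix f g).rank = k := by
    rw [Matrix.rank_of_isUnit _ hu, Fintype.card_fin]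
  calc k = (X.submatrix f g).rank := h1.symm
    _ = (selR f * X * selC g).rank := by rw [sel_mul]
    _ ≤ (selR f * X).rank := Matrix.rank_mul_le_left _ _
    _ ≤ X.rank := Matrix.rank_mul_le_right _ _

variable {m n : ℕ}

def minorP (m n r' : ℕ) (σ : Fin n → Equiv.Perm (Fin m)) : MvPolynomial (Fin m × Fin n) ℝ :=
  ∑ f : Fin r' → Fin m, ∑ g : Fin r' → Fin n,
    (Matrix.det (Matrix.of fun a b =>
      (MvPolynomial.X (σ (g b) (f a), g b) : MvPolynomial (Fin m × Fin n) ℝ))) ^ 2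

lemma polyEval_minorP (r' : ℕ) (σ : Fin n → Equiv.Perm (Fin m)) (X : Matrix (Fin m) (Fin n) ℝ) :
    polyEval (minorP m n r' σ) X
      = ∑ f : Fin r' → Fin m, ∑ g : Fin r' → Fin n,
          ((rowPermM σ X).submatrix f g).det ^ 2 := by
  have key : ∀ (f : Fin r' → Fin m) (g : Fin r' → Fin n),
      (Matrix.of fun a b =>
        (MvPolynomial.X (σ (g b) (f a), g b) : MvPolynomial (Fin m × Fin n) ℝ)).map
          (MvPolynomial.eval fun q => X q.1 q.2) = (rowPermM σ X).submatrix f g := by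
    intro f g
    ext a b
    simp [rowPermM, Matrix.map_apply]
  unfold polyEval minorP
  rw [map_sum]
  refine Finset.sum_congr rfl fun f _ => ?_
  rw [map_sum]
  refine Finset.sum_congr rfl fun g _ => ?_
  rw [map_pow, RingHom.map_det, RingHom.mapMatrix_apply, key]

lemma rank_of_minorP_ne (r' : ℕ) (σ : Fin n → Equiv.Perm (Fin m)) (X : Matrix (Fin m) (Fin n) ℝ)
    (h : polyEval (minorP m n r' σ) X ≠ 0) : r' ≤ (rowPermM σ X).rank := by
  rw [polyEval_minorP] at h
  have : ∃ (f : Fin r' → Fin m) (g : Fin r' → Fin n),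
      ((rowPermM σ X).submatrix f g).det ≠ 0 := by
    by_contra hc
    push_neg at hc
    exact h (Finset.sum_eq_zero fun f _ => Finset.sum_eq_zero fun g _ => by
      rw [hc f g]; ring)
  obtain ⟨f, g, hd⟩ := this
  exact rank_ge_of_det _ f g hd

lemma minorP_ne_of_one (r' : ℕ) (σ : Fin n → Equiv.Perm (Fin m)) (X : Matrix (Fin m) (Fin n) ℝ)
    (f : Fin r' → Fin m) (g : Fin r' → Fin n)
    (h1 : (rowPermM σ X).submatrix f g = 1) :
    polyEval (minorP m n r' σ) X ≠ 0 := by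
  rw [polyEval_minorP]
  have hpos : (0:ℝ) < ∑ f : Fin r' → Fin m, ∑ g : Fin r' → Fin n,
      ((rowPermM σ X).submatrix f g).det ^ 2 := by
    refine Finset.sum_pos' (fun f' _ => Finset.sum_nonneg fun g' _ => sq_nonneg _)
      ⟨f, Finset.mem_univ f, ?_⟩
    refine Finset.sum_pos' (fun g' _ => sq_nonneg _) ⟨g, Finset.mem_univ g, ?_⟩
    rw [h1, Matrix.det_one]
    norm_num
  exact ne_of_gt hpos
lemma aeval_eq_eval' {τ : Type*} (x : τ → ℝ) (p : MvPolynomial τ ℝ) :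
    MvPolynomial.aeval x p = MvPolynomial.eval x p := by
  rw [aeval_def, Algebra.algebraMap_self]; rfl

def liftF (m n r : ℕ) (q : Fin m × Fin n) :
    MvPolynomial ((Fin m × Fin r) ⊕ (Fin r × Fin n)) ℝ :=
  ∑ k : Fin r, MvPolynomial.X (Sum.inl (q.1, k)) * MvPolynomial.X (Sum.inr (k, q.2))

def matOf (m n r : ℕ) (x : (Fin m × Fin r) ⊕ (Fin r × Fin n) → ℝ) :
    Matrix (Fin m) (Fin n) ℝ :=
  (Matrix.of fun i k => x (Sum.inl (i, k))) * (Matrix.of fun k j => x (Sum.inr (k, j)))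

lemma matOf_mem (m n r : ℕ) (x : (Fin m × Fin r) ⊕ (Fin r × Fin n) → ℝ) :
    matOf m n r x ∈ detVar m n r := by
  refine le_trans (Matrix.rank_mul_le_left _ _) ?_
  have := Matrix.rank_le_card_width (Matrix.of fun (i : Fin m) (k : Fin r) => x (Sum.inl (i, k)))
  simpa using this

lemma eval_lift {r : ℕ} (p : MvPolynomial (Fin m × Fin n) ℝ)
    (x : (Fin m × Fin r) ⊕ (Fin r × Fin n) → ℝ) :
    MvPolynomial.eval x (MvPolynomial.bind₁ (liftF m n r) p) = polyEval p (matOf m n r x) := by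
  rw [← aeval_eq_eval', aeval_bind₁]
  unfold polyEval
  rw [← aeval_eq_eval']
  rw [show (fun i : Fin m × Fin n => MvPolynomial.aeval x (liftF m n r i))
      = (fun q : Fin m × Fin n => matOf m n r x q.1 q.2) from
    funext fun q => by rw [aeval_eq_eval']; simp [liftF, matOf, Matrix.mul_apply]]

lemma lift_ne_zero {r : ℕ} (p : MvPolynomial (Fin m × Fin n) ℝ)
    (A : Matrix (Fin m) (Fin r) ℝ) (B : Matrix (Fin r) (Fin n) ℝ)
    (h : polyEval p (A * B) ≠ 0) : MvPolynomial.bind₁ (liftF m n r) p ≠ 0 := by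
  intro h0
  apply h
  have hx := eval_lift (m := m) (n := n) p
    (Sum.elim (fun q : Fin m × Fin r => A q.1 q.2) (fun q : Fin r × Fin n => B q.1 q.2))
  rw [h0, map_zero] at hx
  have hM : matOf m n r
      (Sum.elim (fun q : Fin m × Fin r => A q.1 q.2) (fun q : Fin r × Fin n => B q.1 q.2))
      = A * B := by
    rfl
  rw [hM] at hx
  exact hx.symm

lemma witness_id {r : ℕ} (hm : r ≤ m) (hn : r ≤ n) :
    ∃ (A : Matrix (Fin m) (Fin r) ℝ) (B : Matrix (Fin r) (Fin n) ℝ),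
      polyEval (minorP m n r (fun _ => 1)) (A * B) ≠ 0 := by
  refine ⟨Matrix.of fun i k => if i = Fin.castLE hm k then 1 else 0,
    Matrix.of fun k j => if j = Fin.castLE hn k then 1 else 0, ?_⟩
  apply minorP_ne_of_one r _ _ (Fin.castLE hm) (Fin.castLE hn)
  rw [rowPermM_one]
  ext a b
  simp only [Matrix.submatrix_apply, Matrix.mul_apply, Matrix.of_apply,
    Fin.castLE_inj, Matrix.one_apply]
  rw [Finset.sum_eq_single b]
  · simp [eq_comm]
  · intro k _ hk
    simp [Ne.symm hk]
  · simp
lemma exists_inj_extend {α : Type*} [DecidableEq α] [Fintype α] {k : ℕ}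
    (hk : k + 2 ≤ Fintype.card α) (x y : α) (hxy : x ≠ y) :
    ∃ f : Fin (k + 2) → α, Function.Injective f ∧ f 0 = x ∧ f 1 = y := by
  let e := (Fintype.equivFin α).symm
  let g : Fin (k + 2) → α := fun i => e (Fin.castLE hk i)
  have hginj : Function.Injective g :=
    e.injective.comp (Fin.castLE_injective hk)
  let c := Equiv.swap x (g 0)
  let g1 : Fin (k + 2) → α := fun i => c (g i)
  have hg1inj : Function.Injective g1 := c.injective.comp hginj
  have hg10 : g1 0 = x := Equiv.swap_apply_right _ _
  let d := Equiv.swap y (g1 1)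
  refine ⟨fun i => d (g1 i), d.injective.comp hg1inj, ?_, Equiv.swap_apply_right _ _⟩
  show d (g1 0) = x
  rw [hg10]
  refine Equiv.swap_apply_of_ne_of_ne hxy ?_
  intro h
  rw [← hg10] at h
  exact absurd (hg1inj h) (by simp [Fin.ext_iff])

lemma witness_sigma {r' : ℕ} (σ : Fin n → Equiv.Perm (Fin m)) (j₁ j₂ : Fin n)
    (hσ : σ j₁ ≠ σ j₂) (hm : r' + 2 ≤ m) (hn : r' + 2 ≤ n) :
    ∃ (A : Matrix (Fin m) (Fin (r' + 1)) ℝ) (B : Matrix (Fin (r' + 1)) (Fin n) ℝ),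
      polyEval (minorP m n (r' + 2) σ) (A * B) ≠ 0 := by
  have hu : ∃ u : Fin m, σ j₁ u ≠ σ j₂ u := by
    by_contra hc; push_neg at hc; exact hσ (Equiv.ext hc)
  obtain ⟨u, hu⟩ := hu
  set v : Fin m := (σ j₂)⁻¹ (σ j₁ u) with hv
  have hσv : σ j₂ v = σ j₁ u := (σ j₂).apply_symm_apply _
  have hvu : u ≠ v := fun h => hu (by rw [h, hσv, ← h])
  have hj : j₁ ≠ j₂ := fun h => hσ (by rw [h])
  obtain ⟨f, hfinj, hf0, hf1⟩ :=
    exists_inj_extend (k := r') (by simpa using hm) u v hvu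
  obtain ⟨g, hginj, hg0, hg1⟩ :=
    exists_inj_extend (k := r') (by simpa using hn) j₁ j₂ hj
  refine ⟨Matrix.of fun i k => if i = σ (g k.succ) (f k.succ) then (1:ℝ) else 0,
    Matrix.of fun k j => if (j = g k.succ ∨ (k = 0 ∧ j = g 0)) then (1:ℝ) else 0, ?_⟩
  apply minorP_ne_of_one _ σ _ f g
  ext a b
  simp only [Matrix.submatrix_apply, rowPermM, Matrix.of_apply, Matrix.mul_apply,
    Matrix.one_apply]
  induction b using Fin.cases with
  | zero =>
    rw [Finset.sum_eq_single 0]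
    · rw [if_pos (Or.inr ⟨rfl, rfl⟩), mul_one]
      have hs : ((0 : Fin (r' + 1)).succ) = 1 := rfl
      rw [hs, hg1, hf1, hσv, hg0]
      by_cases ha : a = 0
      · subst ha; rw [hf0, if_pos rfl, if_pos rfl]
      · have hne : ¬ (σ j₁) (f a) = (σ j₁) u := fun hcon =>
          ha (hfinj (show f a = f 0 by rw [hf0]; exact (σ j₁).injective hcon))
        rw [if_neg hne, if_neg ha]
    · intro k _ hk
      refine mul_eq_zero_of_right _ (if_neg ?_)
      rintro (h1 | ⟨h2, _⟩)
      · exact (Fin.succ_ne_zero k) (hginj h1).symm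
      · exact hk h2
    · simp
  | succ b' =>
    rw [Finset.sum_eq_single b']
    · rw [if_pos (Or.inl rfl), mul_one]
      by_cases ha : a = b'.succ
      · subst ha; rw [if_pos rfl, if_pos rfl]
      · have hne : ¬ (σ (g b'.succ)) (f a) = (σ (g b'.succ)) (f b'.succ) :=
          fun hcon => ha (hfinj ((σ (g b'.succ)).injective hcon))
        rw [if_neg hne, if_neg ha]
    · intro k _ hk
      refine mul_eq_zero_of_right _ (if_neg ?_)
      rintro (h1 | ⟨h2, h3⟩)
      · exact hk (Fin.succ_injective _ (hginj h1)).symm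
      · exact (Fin.succ_ne_zero b') (hginj h3)
    · simp
open Classical in
def prodP (m n r : ℕ) : MvPolynomial (Fin m × Fin n) ℝ :=
  minorP m n r (fun _ => 1) *
    ∏ σ : Fin n → Equiv.Perm (Fin m),
      (if ∀ j j' : Fin n, σ j = σ j' then 1 else minorP m n (r + 1) σ)

lemma exists_good {r' : ℕ} (hm : r' + 2 ≤ m) (hn : r' + 2 ≤ n) :
    ∃ X ∈ detVar m n (r' + 1), polyEval (prodP m n (r' + 1)) X ≠ 0 := by
  classical
  have hlift : MvPolynomial.bind₁ (liftF m n (r' + 1)) (prodP m n (r' + 1)) ≠ 0 := by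
    unfold prodP
    rw [_root_.map_mul, map_prod]
    apply mul_ne_zero
    · obtain ⟨A, B, hAB⟩ := witness_id (r := r' + 1) (m := m) (n := n) (by omega) (by omega)
      exact lift_ne_zero _ A B hAB
    · rw [Finset.prod_ne_zero_iff]
      intro σ _
      by_cases hc : ∀ j j' : Fin n, σ j = σ j'
      · rw [if_pos hc, _root_.map_one]; exact one_ne_zero
      · rw [if_neg hc]
        push_neg at hc
        obtain ⟨j₁, j₂, hσ⟩ := hc
        obtain ⟨A, B, hAB⟩ := witness_sigma σ j₁ j₂ hσ hm hn
        exact lift_ne_zero _ A B hAB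
  have hex : ∃ x, MvPolynomial.eval x
      (MvPolynomial.bind₁ (liftF m n (r' + 1)) (prodP m n (r' + 1))) ≠ 0 := by
    by_contra hcon
    push_neg at hcon
    exact hlift (MvPolynomial.funext fun x => by rw [hcon x, map_zero])
  obtain ⟨x, hx⟩ := hex
  rw [eval_lift] at hx
  exact ⟨matOf m n (r' + 1) x, matOf_mem m n (r' + 1) x, hx⟩

end UPCA

open UPCA

/-- **Theorem 1 (UPCA).** There exists a Zariski-open dense subset `U` of the
determinantal variety such that for any `X* ∈ U` and any data
`X̃ = [Π̃₁x₁* ⋯ Π̃ₙxₙ*]`, one has `rank [Π₁x̃₁ ⋯ Πₙx̃ₙ] ≥ r` for every tuple of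
permutation matrices, with equality iff `[Π₁x̃₁ ⋯ Πₙx̃ₙ] = Π X*` for a single
permutation matrix `Π`. -/
theorem stmt0 (m n r : ℕ) (hr : r < min m n) :
    ∃ U : Set (Matrix (Fin m) (Fin n) ℝ),
      IsZariskiOpenDense m n r U ∧
      ∀ Xstar ∈ U,
        ∀ Pt : Fin n → Matrix (Fin m) (Fin m) ℝ, (∀ j, IsPermMatrix (Pt j)) →
        ∀ P : Fin n → Matrix (Fin m) (Fin m) ℝ, (∀ j, IsPermMatrix (P j)) →
          r ≤ (colAct P (colAct Pt Xstar)).rank ∧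
          ((colAct P (colAct Pt Xstar)).rank = r ↔
            ∃ Q : Matrix (Fin m) (Fin m) ℝ, IsPermMatrix Q ∧
              colAct P (colAct Pt Xstar) = Q * Xstar) := by
  classical
  have hm : r < m := hr.trans_le (min_le_left _ _)
  have hn : r < n := hr.trans_le (min_le_right _ _)
  rcases Nat.eq_zero_or_pos r with hr0 | hrpos
  · subst hr0
    refine ⟨detVar m n 0, ⟨1, fun _ => 1, ⟨0, 0, ?_, ?_⟩, ?_⟩, ?_⟩
    · show (0 : Matrix (Fin m) (Fin n) ℝ).rank ≤ 0
      simp [Matrix.rank_zero]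
    · show polyEval 1 (0 : Matrix (Fin m) (Fin n) ℝ) ≠ 0
      unfold polyEval; rw [_root_.map_one]; exact one_ne_zero
    · ext X
      simp only [Set.mem_setOf_eq, Set.mem_sep_iff]
      constructor
      · intro h
        exact ⟨h, ⟨0, by unfold polyEval; rw [_root_.map_one]; exact one_ne_zero⟩⟩
      · exact fun h => h.1
    · intro X hX Pt hPt P hP
      have hX0 : X = 0 := by
        by_contra hne
        have hne2 : ¬ ∀ i j, X i j = 0 := fun h => hne (by ext i j; exact h i j)
        push_neg at hne2
        obtain ⟨i, j, hij⟩ := hne2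
        have h1 : 1 ≤ X.rank := by
          apply rank_ge_of_det X (fun _ : Fin 1 => i) (fun _ : Fin 1 => j)
          rw [Matrix.det_fin_one]
          simpa using hij
        have h0 : X.rank ≤ 0 := hX
        omega
      subst hX0
      have hz : colAct P (colAct Pt (0 : Matrix (Fin m) (Fin n) ℝ)) = 0 := by
        have h1 : colAct Pt (0 : Matrix (Fin m) (Fin n) ℝ) = 0 := by
          ext i j; simp [colAct, Matrix.mulVec]
        rw [h1]; ext i j; simp [colAct, Matrix.mulVec]
      rw [hz]
      refine ⟨Nat.zero_le _, iff_of_true Matrix.rank_zero ?_⟩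
      exact ⟨(1 : Equiv.Perm (Fin m)).permMatrix ℝ, ⟨1, rfl⟩, by rw [Matrix.mul_zero]⟩
  · obtain ⟨r', rfl⟩ : ∃ r', r = r' + 1 := ⟨r - 1, by omega⟩
    have hm2 : r' + 2 ≤ m := by omega
    have hn2 : r' + 2 ≤ n := by omega
    refine ⟨{X ∈ detVar m n (r' + 1) |
        ∃ _i : Fin 1, polyEval (prodP m n (r' + 1)) X ≠ 0},
      ⟨1, fun _ => prodP m n (r' + 1), ?_, rfl⟩, ?_⟩
    · obtain ⟨X, hXmem, hXne⟩ := exists_good hm2 hn2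
      exact ⟨0, X, hXmem, hXne⟩
    · rintro X ⟨hXM, -, hp⟩ Pt hPt P hP
      choose πt hπt using hPt
      choose π hπ using hP
      rw [colAct_colAct P Pt π πt hπ hπt]
      set σ : Fin n → Equiv.Perm (Fin m) := fun j => πt j * π j with hσdef
      have hp2 : polyEval (minorP m n (r' + 1) fun _ => 1) X *
          ∏ σ' : Fin n → Equiv.Perm (Fin m),
            polyEval (if ∀ j j' : Fin n, σ' j = σ' j' then 1
              else minorP m n (r' + 2) σ') X ≠ 0 := by
        unfold prodP polyEval at hp
        unfold polyEval
        rw [_root_.map_mul, map_prod] at hp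
        exact hp
      have hs := left_ne_zero_of_mul hp2
      have hfac := right_ne_zero_of_mul hp2
      have hXM' : X.rank ≤ r' + 1 := hXM
      by_cases hc : ∀ j j' : Fin n, σ j = σ j'
      · have hn0 : 0 < n := by omega
        set τ := σ ⟨0, hn0⟩ with hτ
        have hrow : rowPermM σ X = (τ.permMatrix ℝ) * X := by
          rw [← rowPermM_const]
          ext i j
          show X (σ j i) j = X (τ i) j
          rw [hc j ⟨0, hn0⟩]
        have hrk : (rowPermM σ X).rank = r' + 1 := by
          rw [hrow, rank_permMatrix_mul]
          refine le_antisymm hXM' ?_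
          have h2 := rank_of_minorP_ne (r' + 1) (fun _ => 1) X hs
          rwa [rowPermM_one] at h2
        exact ⟨le_of_eq hrk.symm, iff_of_true hrk ⟨τ.permMatrix ℝ, ⟨τ, rfl⟩, hrow⟩⟩
      · have hts : polyEval (minorP m n (r' + 2) σ) X ≠ 0 := by
          have h3 := Finset.prod_ne_zero_iff.mp hfac σ (Finset.mem_univ σ)
          rwa [if_neg hc] at h3
        have hge := rank_of_minorP_ne (r' + 2) σ X hts
        refine ⟨by omega, iff_of_false (by omega) ?_⟩
        rintro ⟨Q, ⟨ρ, rfl⟩, hQ⟩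
        have hle : (rowPermM σ X).rank ≤ r' + 1 := by
          rw [hQ, rank_permMatrix_mul]
          exact hXM'
        omega
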